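/- There exists a choice of nonnegative, piecewise-constant, locally integrable weights aᵢⱼ : ℝ≥0 → ℝ≥0 on three agents satisfying the integral cut-balance reciprocity condition with K = 1 on intervals [4p, 4p+4] (i.e., for every nonempty proper subset S, Σ_{i∈S,j∉S} ∫_{4p}^{4p+4} aᵢⱼ = Σ_{i∈S,j∉S} ∫_{4p}^{4p+4} aⱼᵢ), such that some trajectory of the consensus system does not converge. -/

import Mathlib

open intervalIntegral

namespace CB

noncomputable def eps (p : ℕ) : ℝ := Real.exp (-((p : ℝ) + 2))

noncomputable def rho (p : ℕ) : ℝ := (p : ℝ) + 2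

lemma eps_pos (p : ℕ) : 0 < eps p := Real.exp_pos _

lemma eps_lt_one (p : ℕ) : eps p < 1 := by
  rw [eps]
  rw [Real.exp_lt_one_iff]
  nlinarith [Nat.cast_nonneg (α := ℝ) p]

lemma rho_pos (p : ℕ) : 0 < rho p := by
  rw [rho]; positivity

noncomputable def st : ℕ → ℝ × ℝ × ℝ
  | 0 => (0, 1/2, 1)
  | p+1 =>
    let u := (st p).1
    let v := (st p).2.1
    let w := (st p).2.2
    let v1 := u + (v - u) * eps p
    let u' := v1 + (u - v1) * eps p
    let v2 := w + (v1 - w) * eps p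
    let w' := v2 + (w - v2) * eps p
    (u', v2, w')

noncomputable def U (p : ℕ) : ℝ := (st p).1
noncomputable def V (p : ℕ) : ℝ := (st p).2.1
noncomputable def W (p : ℕ) : ℝ := (st p).2.2
noncomputable def V1 (p : ℕ) : ℝ := U p + (V p - U p) * eps p
noncomputable def U' (p : ℕ) : ℝ := V1 p + (U p - V1 p) * eps p
noncomputable def V2 (p : ℕ) : ℝ := W p + (V1 p - W p) * eps p
noncomputable def W' (p : ℕ) : ℝ := V2 p + (W p - V2 p) * eps p

lemma U_succ (p : ℕ) : U (p+1) = U' p := rfl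
lemma V_succ (p : ℕ) : V (p+1) = V2 p := rfl
lemma W_succ (p : ℕ) : W (p+1) = W' p := rfl
lemma U_zero : U 0 = 0 := rfl
lemma V_zero : V 0 = 1/2 := rfl
lemma W_zero : W 0 = 1 := rfl

/-- bases and coefficients of the exponential pieces on `[m, m+1)` -/
noncomputable def PQ (m : ℕ) : (Fin 3 → ℝ) × (Fin 3 → ℝ) :=
  if m % 4 = 0 then (![U (m/4), U (m/4), W (m/4)], ![0, V (m/4) - U (m/4), 0])
  else if m % 4 = 1 then (![V1 (m/4), V1 (m/4), W (m/4)], ![U (m/4) - V1 (m/4), 0, 0])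
  else if m % 4 = 2 then (![U' (m/4), W (m/4), W (m/4)], ![0, V1 (m/4) - W (m/4), 0])
  else (![U' (m/4), V2 (m/4), V2 (m/4)], ![0, 0, W (m/4) - V2 (m/4)])

noncomputable def Ac (m : ℕ) (i j : Fin 3) : ℝ :=
  if (m % 4 = 0 ∧ i = 1 ∧ j = 0) ∨ (m % 4 = 1 ∧ i = 0 ∧ j = 1) ∨
     (m % 4 = 2 ∧ i = 1 ∧ j = 2) ∨ (m % 4 = 3 ∧ i = 2 ∧ j = 1)
  then rho (m/4) else 0

noncomputable def fpiece (m : ℕ) (i : Fin 3) (t : ℝ) : ℝ :=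
  (PQ m).1 i + (PQ m).2 i * Real.exp (-(rho (m/4)) * (t - m))

noncomputable def xx (i : Fin 3) (t : ℝ) : ℝ := fpiece ⌊t⌋₊ i t

noncomputable def aa (i j : Fin 3) (t : ℝ) : ℝ := Ac ⌊t⌋₊ i j

lemma Ac_nonneg (m : ℕ) (i j : Fin 3) : 0 ≤ Ac m i j := by
  rw [Ac]; split
  · exact (rho_pos _).le
  · exact le_rfl

/-- the key algebraic identity: the consensus vector field equals the derivative
of the exponential piece. -/
lemma key_identity (m : ℕ) (i : Fin 3) (t : ℝ) :
    ∑ j, Ac m i j * (fpiece m j t - fpiece m i t)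
      = -(rho (m/4)) * (PQ m).2 i * Real.exp (-(rho (m/4)) * (t - m)) := by
  have h4 : m % 4 = 0 ∨ m % 4 = 1 ∨ m % 4 = 2 ∨ m % 4 = 3 := by omega
  rcases h4 with h | h | h | h <;>
    fin_cases i <;>
      simp [Ac, PQ, fpiece, h, Fin.sum_univ_three] <;> ring

/-- junction: the pieces match up at the integers. -/
lemma junction (m : ℕ) (i : Fin 3) :
    (PQ (m+1)).1 i + (PQ (m+1)).2 i = (PQ m).1 i + (PQ m).2 i * eps (m/4) := by
  have h4 : m % 4 = 0 ∨ m % 4 = 1 ∨ m % 4 = 2 ∨ m % 4 = 3 := by omega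
  have heps : ∀ p, eps p = Real.exp (-((p:ℝ)+2)) := fun _ => rfl
  rcases h4 with h | h | h | h
  · have h1 : (m+1) % 4 = 1 := by omega
    have h2 : (m+1) / 4 = m / 4 := by omega
    fin_cases i <;> simp [PQ, h, h1, h2, V1] <;> ring
  · have h1 : (m+1) % 4 = 2 := by omega
    have h2 : (m+1) / 4 = m / 4 := by omega
    fin_cases i <;> simp [PQ, h, h1, h2, U'] <;> ring
  · have h1 : (m+1) % 4 = 3 := by omega
    have h2 : (m+1) / 4 = m / 4 := by omega
    fin_cases i <;> simp [PQ, h, h1, h2, V2] <;> ring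
  · have h1 : (m+1) % 4 = 0 := by omega
    have h2 : (m+1) / 4 = m / 4 + 1 := by omega
    fin_cases i <;>
      simp [PQ, h, h1, h2, U_succ, V_succ, W_succ, U', V2, W'] <;> ring

/-- invariant for the state sequence. -/
lemma stInv (p : ℕ) : 0 ≤ U p ∧ U p ≤ V p ∧ V p ≤ W p ∧ W p ≤ 1 ∧
    U p ≤ ∑ q ∈ Finset.range p, eps q ∧ 1 - (∑ q ∈ Finset.range p, eps q) ≤ W p := by
  induction p with
  | zero => norm_num [U_zero, V_zero, W_zero]
  | succ p ih =>
    obtain ⟨h0, huv, hvw, hw1, hus, hws⟩ := ih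
    have he0 := eps_pos p
    have he1 := eps_lt_one p
    rw [U_succ, V_succ, W_succ, Finset.sum_range_succ]
    have hv1l : U p ≤ V1 p := by rw [V1]; nlinarith
    have hv1u : V1 p ≤ V p := by rw [V1]; nlinarith
    have hu'l : U p ≤ U' p := by rw [U']; nlinarith
    have hu'u : U' p ≤ V1 p := by rw [U']; nlinarith
    have hv2l : V1 p ≤ V2 p := by rw [V2]; nlinarith
    have hv2u : V2 p ≤ W p := by rw [V2]; nlinarith
    have hw'l : V2 p ≤ W' p := by rw [W']; nlinarith
    have hw'u : W' p ≤ W p := by rw [W']; nlinarith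
    refine ⟨by linarith, by linarith, by linarith, by linarith, ?_, ?_⟩
    · have : V1 p ≤ U p + eps p := by rw [V1]; nlinarith
      linarith
    · have : W p - eps p ≤ V2 p := by rw [V2]; nlinarith
      linarith

lemma sum_eps_le (p : ℕ) : ∑ q ∈ Finset.range p, eps q ≤ 0.24 := by
  have hr : Real.exp (-1 : ℝ) ≤ 0.38 := by
    rw [Real.exp_neg]
    rw [inv_le_comm₀ (Real.exp_pos 1) (by norm_num)]
    calc (0.38:ℝ)⁻¹ ≤ 2.7 := by norm_num
    _ ≤ Real.exp 1 := by linarith [Real.exp_one_gt_d9]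
  have hr0 : (0:ℝ) < Real.exp (-1 : ℝ) := Real.exp_pos _
  have heq : ∀ q : ℕ, eps q = Real.exp (-1:ℝ) ^ (q + 2) := by
    intro q
    rw [eps, ← Real.exp_nat_mul]
    congr 1
    push_cast
    ring
  have hsum : ∑ q ∈ Finset.range p, eps q
      = Real.exp (-1:ℝ) ^ 2 * ∑ q ∈ Finset.range p, Real.exp (-1:ℝ) ^ q := by
    rw [Finset.mul_sum]
    exact Finset.sum_congr rfl fun q _ => by rw [heq]; ring
  have h1 : Real.exp (-1:ℝ) < 1 := by nlinarith
  have hgeom : ∑ q ∈ Finset.range p, Real.exp (-1:ℝ) ^ q ≤ (1 - Real.exp (-1:ℝ))⁻¹ := by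
    rw [geom_sum_eq (ne_of_lt h1)]
    rw [div_le_iff_of_neg (by linarith : Real.exp (-1:ℝ) - 1 < 0)]
    have h2 : (1 - Real.exp (-1:ℝ))⁻¹ * (Real.exp (-1:ℝ) - 1) = -1 := by
      have hne : (1 - Real.exp (-1:ℝ)) ≠ 0 := by linarith
      field_simp
      ring
    rw [h2]
    nlinarith [pow_nonneg hr0.le p]
  have hinv : (1 - Real.exp (-1:ℝ))⁻¹ ≤ (1 - 0.38:ℝ)⁻¹ := by
    apply inv_anti₀ <;> nlinarith
  rw [hsum]
  have h2 : Real.exp (-1:ℝ) ^ 2 ≤ 0.38 ^ 2 := by nlinarith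
  have h3 : (0:ℝ) ≤ ∑ q ∈ Finset.range p, Real.exp (-1:ℝ) ^ q :=
    Finset.sum_nonneg fun q _ => by positivity
  calc Real.exp (-1:ℝ) ^ 2 * ∑ q ∈ Finset.range p, Real.exp (-1:ℝ) ^ q
      ≤ 0.38 ^ 2 * (1 - 0.38:ℝ)⁻¹ := by
        apply mul_le_mul h2 (hgeom.trans hinv) h3 (by norm_num)
  _ ≤ 0.24 := by norm_num

lemma V1_le (p : ℕ) : V1 p ≤ 0.3 := by
  obtain ⟨h0, huv, hvw, hw1, hus, hws⟩ := stInv p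
  have := sum_eps_le (p+1)
  rw [Finset.sum_range_succ] at this
  have he0 := eps_pos p
  have : V1 p ≤ U p + eps p := by rw [V1]; nlinarith
  have := sum_eps_le p
  nlinarith [eps_pos p, (sum_eps_le (p+1)), Finset.sum_range_succ eps p]

lemma V2_ge (p : ℕ) : 0.7 ≤ V2 p := by
  obtain ⟨h0, huv, hvw, hw1, hus, hws⟩ := stInv p
  have hs := sum_eps_le (p+1)
  rw [Finset.sum_range_succ] at hs
  have he0 := eps_pos p
  have h1 : W p - eps p ≤ V2 p := by
    rw [V2]
    have hv1l : U p ≤ V1 p := by rw [V1]; nlinarith [eps_lt_one p]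
    have hv1u : V1 p ≤ V p := by rw [V1]; nlinarith [eps_lt_one p]
    nlinarith [eps_lt_one p]
  linarith

/-- all bases in [0,1], coefficients bounded by 1 in absolute value. -/
lemma PQ_bounds (m : ℕ) (i : Fin 3) :
    0 ≤ (PQ m).1 i ∧ (PQ m).1 i ≤ 1 ∧ |(PQ m).2 i| ≤ 1 := by
  obtain ⟨h0, huv, hvw, hw1, -, -⟩ := stInv (m/4)
  set p := m / 4 with hp
  have he0 := eps_pos p
  have he1 := eps_lt_one p
  have hv1l : U p ≤ V1 p := by rw [V1]; nlinarith
  have hv1u : V1 p ≤ V p := by rw [V1]; nlinarith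
  have hu'l : U p ≤ U' p := by rw [U']; nlinarith
  have hu'u : U' p ≤ V1 p := by rw [U']; nlinarith
  have hv2l : V1 p ≤ V2 p := by rw [V2]; nlinarith
  have hv2u : V2 p ≤ W p := by rw [V2]; nlinarith
  have h4 : m % 4 = 0 ∨ m % 4 = 1 ∨ m % 4 = 2 ∨ m % 4 = 3 := by omega
  rcases h4 with h | h | h | h <;> fin_cases i <;>
    simp [PQ, h, ← hp, abs_le] <;> (repeat' constructor) <;> linarith

lemma floor_eq_of_mem {m : ℕ} {t : ℝ} (h1 : (m:ℝ) ≤ t) (h2 : t < m + 1) : ⌊t⌋₊ = m := by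
  rw [Nat.floor_eq_iff (le_trans (by positivity) h1)]
  exact ⟨h1, h2⟩

lemma xx_eq_fpiece {m : ℕ} {t : ℝ} (h1 : (m:ℝ) ≤ t) (h2 : t < m + 1) (i : Fin 3) :
    xx i t = fpiece m i t := by
  rw [xx, floor_eq_of_mem h1 h2]

lemma xx_eq_fpiece0 {t : ℝ} (h2 : t < 1) (i : Fin 3) : xx i t = fpiece 0 i t := by
  rw [xx, Nat.floor_eq_zero.mpr h2]

lemma fpiece_cont (m : ℕ) (i : Fin 3) : Continuous (fpiece m i) := by
  unfold fpiece
  fun_prop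

lemma fpiece_junction (m : ℕ) (i : Fin 3) :
    fpiece m i ((m:ℝ) + 1) = fpiece (m+1) i ((m:ℝ) + 1) := by
  have h1 : fpiece m i ((m:ℝ)+1) = (PQ m).1 i + (PQ m).2 i * eps (m/4) := by
    rw [fpiece]
    norm_num [eps, rho]
  have h2 : fpiece (m+1) i ((m:ℝ)+1) = (PQ (m+1)).1 i + (PQ (m+1)).2 i := by
    rw [fpiece]
    have : -(rho ((m+1)/4)) * (((m:ℝ)+1) - ((m+1:ℕ):ℝ)) = 0 := by
      push_cast; ring
    rw [this, Real.exp_zero, mul_one]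
  rw [h1, h2, junction]

lemma xx_cwa_right (n : ℕ) (i : Fin 3) :
    ContinuousWithinAt (xx i) (Set.Ici (n:ℝ)) (n:ℝ) := by
  have hmem : Set.Ico (n:ℝ) ((n:ℝ)+1) ∈ nhdsWithin (n:ℝ) (Set.Ici (n:ℝ)) :=
    Ico_mem_nhdsGE_of_mem (by constructor <;> norm_num)
  refine ContinuousWithinAt.congr_of_eventuallyEq
    ((fpiece_cont n i).continuousAt.continuousWithinAt) ?_ ?_
  · filter_upwards [hmem] with t ht
    exact xx_eq_fpiece ht.1 ht.2 i
  · exact xx_eq_fpiece le_rfl (by norm_num) i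

lemma xx_cwa_left (k : ℕ) (i : Fin 3) :
    ContinuousWithinAt (xx i) (Set.Iio ((k:ℝ)+1)) ((k:ℝ)+1) := by
  have hval : xx i ((k:ℝ)+1) = fpiece (k+1) i ((k:ℝ)+1) := by
    have := xx_eq_fpiece (m := k+1) (t := (k:ℝ)+1) (by push_cast; exact le_rfl) (by push_cast; linarith) i
    simpa using this
  have hev : xx i =ᶠ[nhdsWithin ((k:ℝ)+1) (Set.Iio ((k:ℝ)+1))] fpiece k i := by
    filter_upwards [Ioo_mem_nhdsLT_of_mem (a := (k:ℝ)) (Set.mem_Ioc.mpr ⟨by linarith, le_rfl⟩)] with t ht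
    exact xx_eq_fpiece ht.1.le ht.2 i
  have htend : Filter.Tendsto (fpiece k i) (nhdsWithin ((k:ℝ)+1) (Set.Iio ((k:ℝ)+1)))
      (nhds (fpiece k i ((k:ℝ)+1))) :=
    ((fpiece_cont k i).tendsto _).mono_left nhdsWithin_le_nhds
  have : Filter.Tendsto (xx i) (nhdsWithin ((k:ℝ)+1) (Set.Iio ((k:ℝ)+1)))
      (nhds (fpiece k i ((k:ℝ)+1))) := htend.congr' hev.symm
  rw [ContinuousWithinAt, hval, ← fpiece_junction]
  exact this

lemma xx_cont (i : Fin 3) : Continuous (xx i) := by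
  rw [continuous_iff_continuousAt]
  intro t₀
  rcases lt_or_ge t₀ 1 with h1 | h1
  · refine ContinuousAt.congr ((fpiece_cont 0 i).continuousAt) ?_
    filter_upwards [Iio_mem_nhds h1] with t ht
    exact (xx_eq_fpiece0 ht i).symm
  · have hm1 : 1 ≤ ⌊t₀⌋₊ := Nat.le_floor (by exact_mod_cast h1)
    have hml : ((⌊t₀⌋₊:ℕ):ℝ) ≤ t₀ := Nat.floor_le (by linarith)
    have hmu : t₀ < ((⌊t₀⌋₊:ℕ):ℝ) + 1 := Nat.lt_floor_add_one t₀
    rcases eq_or_lt_of_le hml with heq | hlt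
    · -- t₀ is the natural number ⌊t₀⌋₊ = k + 1
      obtain ⟨k, hk⟩ : ∃ k, ⌊t₀⌋₊ = k + 1 := ⟨⌊t₀⌋₊ - 1, by omega⟩
      have ht₀ : t₀ = (k:ℝ) + 1 := by rw [← heq, hk]; push_cast; ring
      rw [continuousAt_iff_continuous_left_right]
      constructor
      · rw [← continuousWithinAt_Iio_iff_Iic, ht₀]
        exact xx_cwa_left k i
      · have := xx_cwa_right (k+1) i
        rw [ht₀]
        have hcast : (((k+1:ℕ)):ℝ) = (k:ℝ) + 1 := by push_cast; ring
        rw [hcast] at this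
        exact this
    · refine ContinuousAt.congr ((fpiece_cont ⌊t₀⌋₊ i).continuousAt) ?_
      filter_upwards [Ioo_mem_nhds hlt hmu] with t ht
      exact (xx_eq_fpiece ht.1.le ht.2 i).symm

noncomputable def vv (i : Fin 3) (t : ℝ) : ℝ := ∑ j, aa i j t * (xx j t - xx i t)

lemma fpiece_hasDeriv (m : ℕ) (i : Fin 3) (t : ℝ) :
    HasDerivAt (fpiece m i)
      (-(rho (m/4)) * (PQ m).2 i * Real.exp (-(rho (m/4)) * (t - m))) t := by
  have h : HasDerivAt (fun s : ℝ => -(rho (m/4)) * (s - (m:ℝ))) (-(rho (m/4))) t := by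
    simpa using ((hasDerivAt_id t).sub_const ((m:ℕ):ℝ)).const_mul (-(rho (m/4)))
  have h2 := (h.exp).const_mul ((PQ m).2 i)
  have h3 := h2.const_add ((PQ m).1 i)
  exact h3.congr_deriv (by ring)

lemma xx_hasDerivRight (i : Fin 3) (t : ℝ) (ht : 0 ≤ t) :
    HasDerivWithinAt (xx i) (vv i t) (Set.Ioi t) t := by
  set m := ⌊t⌋₊ with hm
  have hml : (m:ℝ) ≤ t := Nat.floor_le ht
  have hmu : t < (m:ℝ) + 1 := Nat.lt_floor_add_one t
  have hmem : Set.Ico (m:ℝ) ((m:ℝ)+1) ∈ nhdsWithin t (Set.Ici t) := by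
    rw [mem_nhdsWithin]
    exact ⟨Set.Iio ((m:ℝ)+1), isOpen_Iio, hmu,
      fun s hs => ⟨le_trans hml hs.2, hs.1⟩⟩
  have hd : HasDerivWithinAt (xx i)
      (-(rho (m/4)) * (PQ m).2 i * Real.exp (-(rho (m/4)) * (t - m))) (Set.Ici t) t := by
    refine ((fpiece_hasDeriv m i t).hasDerivWithinAt).congr_of_eventuallyEq ?_ ?_
    · filter_upwards [hmem] with s hs
      exact xx_eq_fpiece hs.1 hs.2 i
    · exact xx_eq_fpiece hml hmu i
  have hval : vv i t = -(rho (m/4)) * (PQ m).2 i * Real.exp (-(rho (m/4)) * (t - m)) := by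
    rw [vv, ← key_identity m i t]
    refine Finset.sum_congr rfl fun j _ => ?_
    rw [aa, ← hm, xx_eq_fpiece hml hmu, xx_eq_fpiece hml hmu]
  rw [hval]
  exact hd.mono Set.Ioi_subset_Ici_self

lemma aa_meas (i j : Fin 3) : Measurable (aa i j) :=
  (measurable_from_nat (f := fun m => Ac m i j)).comp Nat.measurable_floor

lemma aa_le {t T : ℝ} (hT0 : 0 ≤ T) (hT : t ≤ T) (i j : Fin 3) : aa i j t ≤ T + 2 := by
  have h1 : aa i j t ≤ rho (⌊t⌋₊ / 4) := by
    rw [aa, Ac]; split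
    · exact le_rfl
    · exact (rho_pos _).le
  have h2 : ((⌊t⌋₊ / 4 : ℕ) : ℝ) ≤ (⌊t⌋₊ : ℝ) := by exact_mod_cast Nat.div_le_self _ _
  have h3 : ((⌊t⌋₊ : ℕ) : ℝ) ≤ max t 0 := by
    rcases le_or_gt 0 t with h | h
    · exact le_trans (Nat.floor_le h) (le_max_left _ _)
    · rw [Nat.floor_of_nonpos h.le]; simp
  have h4 : max t 0 ≤ max T 0 := max_le_max hT le_rfl
  rw [rho] at h1
  have h5 : max T 0 = T := max_eq_left hT0
  nlinarith [h1, h2, h3, h4]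

lemma aa_nonneg (i j : Fin 3) (t : ℝ) : 0 ≤ aa i j t := Ac_nonneg _ _ _

lemma aa_intInt (i j : Fin 3) {c d : ℝ} (hc : 0 ≤ c) (hd : 0 ≤ d) :
    IntervalIntegrable (aa i j) MeasureTheory.volume c d := by
  rw [intervalIntegrable_iff]
  apply MeasureTheory.Measure.integrableOn_of_bounded (M := max c d + 2)
  · exact (measure_Ioc_lt_top).ne
  · exact (aa_meas i j).aestronglyMeasurable
  · refine MeasureTheory.ae_restrict_of_forall_mem measurableSet_uIoc fun t ht => ?_
    rw [Real.norm_eq_abs, abs_of_nonneg (aa_nonneg i j t)]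
    exact aa_le (le_trans hc (le_max_left c d)) ht.2 i j

lemma xx_bound (i : Fin 3) (t : ℝ) (ht : 0 ≤ t) : |xx i t| ≤ 2 := by
  obtain ⟨hP0, hP1, hQ⟩ := PQ_bounds ⌊t⌋₊ i
  have hml : ((⌊t⌋₊:ℕ):ℝ) ≤ t := Nat.floor_le ht
  have hexp : Real.exp (-(rho (⌊t⌋₊/4)) * (t - (⌊t⌋₊:ℝ))) ≤ 1 := by
    rw [Real.exp_le_one_iff]
    have := rho_pos (⌊t⌋₊/4)
    nlinarith
  have hexp0 : 0 < Real.exp (-(rho (⌊t⌋₊/4)) * (t - (⌊t⌋₊:ℝ))) := Real.exp_pos _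
  rw [xx, fpiece]
  have := abs_mul ((PQ ⌊t⌋₊).2 i) (Real.exp (-(rho (⌊t⌋₊/4)) * (t - (⌊t⌋₊:ℝ))))
  calc |(PQ ⌊t⌋₊).1 i + (PQ ⌊t⌋₊).2 i * Real.exp (-(rho (⌊t⌋₊/4)) * (t - (⌊t⌋₊:ℝ)))|
      ≤ |(PQ ⌊t⌋₊).1 i| + |(PQ ⌊t⌋₊).2 i * Real.exp (-(rho (⌊t⌋₊/4)) * (t - (⌊t⌋₊:ℝ)))| :=
        abs_add_le _ _
  _ ≤ 2 := by
      rw [abs_mul, abs_of_nonneg hexp0.le, abs_of_nonneg hP0]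
      nlinarith [abs_nonneg ((PQ ⌊t⌋₊).2 i)]

lemma vv_meas (i : Fin 3) : Measurable (vv i) := by
  unfold vv
  refine Finset.measurable_sum _ fun j _ => ?_
  exact (aa_meas i j).mul (((xx_cont j).measurable).sub ((xx_cont i).measurable))

lemma vv_intInt (i : Fin 3) (t : ℝ) (ht : 0 ≤ t) :
    IntervalIntegrable (vv i) MeasureTheory.volume 0 t := by
  rw [intervalIntegrable_iff]
  apply MeasureTheory.Measure.integrableOn_of_bounded (M := 3 * ((t+2) * 4))
  · exact measure_Ioc_lt_top.ne
  · exact (vv_meas i).aestronglyMeasurable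
  · refine MeasureTheory.ae_restrict_of_forall_mem measurableSet_uIoc fun s hs => ?_
    rw [Set.uIoc_of_le ht] at hs
    have hs0 : 0 ≤ s := hs.1.le
    calc ‖vv i s‖ ≤ ∑ j, ‖aa i j s * (xx j s - xx i s)‖ := norm_sum_le _ _
    _ ≤ ∑ _j : Fin 3, (t+2) * 4 := by
        refine Finset.sum_le_sum fun j _ => ?_
        rw [norm_mul, Real.norm_eq_abs, Real.norm_eq_abs,
          abs_of_nonneg (aa_nonneg i j s)]
        have h1 : aa i j s ≤ t + 2 := aa_le ht hs.2 i j
        have h2 : |xx j s - xx i s| ≤ 4 := by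
          calc |xx j s - xx i s| ≤ |xx j s| + |xx i s| := abs_sub _ _
          _ ≤ 4 := by linarith [xx_bound j s hs0, xx_bound i s hs0]
        have h3 : 0 ≤ aa i j s := aa_nonneg i j s
        nlinarith [abs_nonneg (xx j s - xx i s)]
    _ = 3 * ((t+2) * 4) := by
        rw [Finset.sum_const, Finset.card_univ]
        norm_num

lemma ode (i : Fin 3) (t : ℝ) (ht : 0 ≤ t) :
    xx i t = xx i 0 + ∫ s in (0:ℝ)..t, vv i s := by
  have h := intervalIntegral.integral_eq_sub_of_hasDeriv_right_of_le ht
    ((xx_cont i).continuousOn)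
    (fun s hs => xx_hasDerivRight i s hs.1.le)
    (vv_intInt i t ht)
  linarith

lemma int_unit (n : ℕ) (i j : Fin 3) :
    ∫ t in ((n:ℕ):ℝ)..(((n:ℕ)):ℝ)+1, aa i j t = Ac n i j := by
  have h1 : ∀ᵐ t : ℝ ∂MeasureTheory.volume, t ≠ ((n:ℝ)+1) := by
    rw [MeasureTheory.ae_iff]
    simpa [not_not] using (Real.volume_singleton (a := (n:ℝ)+1))
  have hae : ∀ᵐ t : ℝ ∂MeasureTheory.volume,
      t ∈ Set.uIoc ((n:ℝ)) ((n:ℝ)+1) → aa i j t = Ac n i j := by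
    filter_upwards [h1] with t htne htm
    rw [Set.uIoc_of_le (by linarith)] at htm
    have h2 : t < (n:ℝ)+1 := lt_of_le_of_ne htm.2 htne
    rw [aa, floor_eq_of_mem htm.1.le h2]
  rw [intervalIntegral.integral_congr_ae hae, intervalIntegral.integral_const]
  simp

lemma int_block (p : ℕ) (i j : Fin 3) :
    ∫ t in (4*(p:ℝ))..(4*(p:ℝ)+4), aa i j t
      = Ac (4*p) i j + Ac (4*p+1) i j + Ac (4*p+2) i j + Ac (4*p+3) i j := by
  have I : ∀ u v : ℝ, 0 ≤ u → 0 ≤ v →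
      IntervalIntegrable (aa i j) MeasureTheory.volume u v :=
    fun u v hu hv => aa_intInt i j hu hv
  have c0 : ((4*p : ℕ):ℝ) = 4*(p:ℝ) := by push_cast; ring
  have c1 : ((4*p+1 : ℕ):ℝ) = 4*(p:ℝ)+1 := by push_cast; ring
  have c2 : ((4*p+2 : ℕ):ℝ) = 4*(p:ℝ)+2 := by push_cast; ring
  have c3 : ((4*p+3 : ℕ):ℝ) = 4*(p:ℝ)+3 := by push_cast; ring
  have e0 := int_unit (4*p) i j
  have e1 := int_unit (4*p+1) i j
  have e2 := int_unit (4*p+2) i j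
  have e3 := int_unit (4*p+3) i j
  rw [c0] at e0; rw [c1] at e1; rw [c2] at e2; rw [c3] at e3
  have pn : (0:ℝ) ≤ 4*(p:ℝ) := by positivity
  have s1 : (∫ t in (4*(p:ℝ))..(4*(p:ℝ)+1), aa i j t)
      + (∫ t in (4*(p:ℝ)+1)..(4*(p:ℝ)+4), aa i j t)
      = ∫ t in (4*(p:ℝ))..(4*(p:ℝ)+4), aa i j t :=
    intervalIntegral.integral_add_adjacent_intervals
      (I _ _ pn (by linarith)) (I _ _ (by linarith) (by linarith))
  have s2 : (∫ t in (4*(p:ℝ)+1)..(4*(p:ℝ)+2), aa i j t)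
      + (∫ t in (4*(p:ℝ)+2)..(4*(p:ℝ)+4), aa i j t)
      = ∫ t in (4*(p:ℝ)+1)..(4*(p:ℝ)+4), aa i j t :=
    intervalIntegral.integral_add_adjacent_intervals
      (I _ _ (by linarith) (by linarith)) (I _ _ (by linarith) (by linarith))
  have s3 : (∫ t in (4*(p:ℝ)+2)..(4*(p:ℝ)+3), aa i j t)
      + (∫ t in (4*(p:ℝ)+3)..(4*(p:ℝ)+4), aa i j t)
      = ∫ t in (4*(p:ℝ)+2)..(4*(p:ℝ)+4), aa i j t :=
    intervalIntegral.integral_add_adjacent_intervals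
      (I _ _ (by linarith) (by linarith)) (I _ _ (by linarith) (by linarith))
  have h1 : 4*(p:ℝ)+1+1 = 4*(p:ℝ)+2 := by ring
  have h2 : 4*(p:ℝ)+2+1 = 4*(p:ℝ)+3 := by ring
  have h3 : 4*(p:ℝ)+3+1 = 4*(p:ℝ)+4 := by ring
  rw [h1] at e1; rw [h2] at e2; rw [h3] at e3
  rw [← s1, ← s2, ← s3, e0, e1, e2, e3]
  ring

lemma block_sym (p : ℕ) (i j : Fin 3) :
    (∫ t in (4*(p:ℝ))..(4*(p:ℝ)+4), aa i j t)
      = ∫ t in (4*(p:ℝ))..(4*(p:ℝ)+4), aa j i t := by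
  rw [int_block, int_block]
  have m0 : (4*p) % 4 = 0 := by omega
  have m1 : (4*p+1) % 4 = 1 := by omega
  have m2 : (4*p+2) % 4 = 2 := by omega
  have m3 : (4*p+3) % 4 = 3 := by omega
  have d0 : (4*p) / 4 = p := by omega
  have d1 : (4*p+1) / 4 = p := by omega
  have d2 : (4*p+2) / 4 = p := by omega
  have d3 : (4*p+3) / 4 = p := by omega
  fin_cases i <;> fin_cases j <;>
    simp [Ac, m0, m1, m2, m3, d0, d1, d2, d3, Fin.ext_iff] <;> ring

lemma xx1_eval1 (p : ℕ) : xx 1 ((4*p+1 : ℕ):ℝ) = V1 p := by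
  rw [xx, Nat.floor_natCast, fpiece]
  have m1 : (4*p+1) % 4 = 1 := by omega
  have d1 : (4*p+1) / 4 = p := by omega
  simp [PQ, m1, d1]

lemma xx1_eval3 (p : ℕ) : xx 1 ((4*p+3 : ℕ):ℝ) = V2 p := by
  rw [xx, Nat.floor_natCast, fpiece]
  have m3 : (4*p+3) % 4 = 3 := by omega
  have d3 : (4*p+3) / 4 = p := by omega
  simp [PQ, m3, d3]

lemma not_conv : ¬ ∃ L : ℝ, Filter.Tendsto (xx 1) Filter.atTop (nhds L) := by
  rintro ⟨L, hL⟩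
  have harg1 : Filter.Tendsto (fun p : ℕ => ((4*p+1 : ℕ):ℝ)) Filter.atTop Filter.atTop := by
    apply tendsto_natCast_atTop_atTop.comp
    exact Filter.tendsto_atTop_mono (fun p => by simp only [id_eq]; omega) Filter.tendsto_id
  have harg3 : Filter.Tendsto (fun p : ℕ => ((4*p+3 : ℕ):ℝ)) Filter.atTop Filter.atTop := by
    apply tendsto_natCast_atTop_atTop.comp
    exact Filter.tendsto_atTop_mono (fun p => by simp only [id_eq]; omega) Filter.tendsto_id
  have c1 : Filter.Tendsto (fun p : ℕ => xx 1 ((4*p+1 : ℕ):ℝ)) Filter.atTop (nhds L) :=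
    hL.comp harg1
  have c3 : Filter.Tendsto (fun p : ℕ => xx 1 ((4*p+3 : ℕ):ℝ)) Filter.atTop (nhds L) :=
    hL.comp harg3
  have hle : L ≤ 0.3 :=
    le_of_tendsto c1 (Filter.Eventually.of_forall fun p => by rw [xx1_eval1]; exact V1_le p)
  have hge : (0.7:ℝ) ≤ L :=
    ge_of_tendsto c3 (Filter.Eventually.of_forall fun p => by rw [xx1_eval3]; exact V2_ge p)
  linarith

end CB

open CB in
/-- There exist nonnegative, piecewise-constant (constant on each
unit interval `[m, m+1)`), locally integrable weights on three agents that
satisfy the integral cut-balance reciprocity condition with `K = 1` on the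
intervals `[4p, 4p+4]`, but for which some trajectory of the consensus system
does not converge. -/
theorem exists_cut_balanced_nonconvergent_system :
    ∃ (a : Fin 3 → Fin 3 → ℝ → ℝ) (x : Fin 3 → ℝ → ℝ),
      (∀ i j t, 0 ≤ a i j t) ∧
      -- piecewise constant on unit intervals
      (∀ i j (m : ℕ) (s t : ℝ), s ∈ Set.Ico (m : ℝ) (m + 1) →
        t ∈ Set.Ico (m : ℝ) (m + 1) → a i j s = a i j t) ∧
      (∀ i j, Measurable (a i j)) ∧
      (∀ i j (t : ℝ), 0 ≤ t →
        IntervalIntegrable (a i j) MeasureTheory.volume 0 t) ∧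
      -- integral cut-balance with K = 1 on the intervals [4p, 4p+4]
      (∀ (p : ℕ) (S : Finset (Fin 3)), S.Nonempty → S ≠ Finset.univ →
        (∑ i ∈ S, ∑ j ∈ Sᶜ, ∫ t in (4*(p:ℝ))..(4*(p:ℝ)+4), a i j t)
          = ∑ i ∈ S, ∑ j ∈ Sᶜ, ∫ t in (4*(p:ℝ))..(4*(p:ℝ)+4), a j i t) ∧
      -- x is a trajectory of the consensus system
      (∀ i, Continuous (x i)) ∧
      (∀ i (t : ℝ), 0 ≤ t →
        x i t = x i 0 + ∫ s in (0:ℝ)..t, ∑ j, a i j s * (x j s - x i s)) ∧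
      -- it does not converge
      (∃ i, ¬ ∃ L : ℝ, Filter.Tendsto (x i) Filter.atTop (nhds L)) := by
  refine ⟨aa, xx, fun i j t => aa_nonneg i j t, ?_, fun i j => aa_meas i j,
    fun i j t ht => aa_intInt i j le_rfl ht, ?_, fun i => xx_cont i, ?_, ⟨1, not_conv⟩⟩
  · intro i j m s t hs ht
    rw [aa, aa, floor_eq_of_mem hs.1 hs.2, floor_eq_of_mem ht.1 ht.2]
  · intro p S _ _
    exact Finset.sum_congr rfl fun i _ =>
      Finset.sum_congr rfl fun j _ => block_sym p i j
  · intro i t ht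
    exact ode i t ht
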